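/- arXiv:2004.04524 — 5 statements merged into one kernel-verified Lean document; each statement's English description precedes it below -/
import Mathlib

section
/- For uncertain variables x : Ω → X and y : Ω → Y, the conditional range of x given an observation y₀ satisfies Bayes' rule: ⟦x | y₀⟧ = {x₀ ∈ ⟦x⟧ : ⟦y | x₀⟧ ∩ {y₀} ≠ ∅}, where ⟦y | x₀⟧ is the conditional range of y given x = x₀. -/
theorem bayes_rule_uncertain {Ω X Y : Type*} (x : Ω → X) (y : Ω → Y) (y₀ : Y) :
    x '' (y ⁻¹' {y₀}) = {x₀ ∈ Set.range x | y '' (x ⁻¹' {x₀}) ∩ {y₀} ≠ ∅} := by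
  ext x₀
  simp only [Set.mem_image, Set.mem_preimage, Set.mem_singleton_iff, Set.mem_setOf_eq,
    Set.mem_range, ← Set.nonempty_iff_ne_empty, Set.mem_inter_iff, Set.Nonempty]
  constructor
  · rintro ⟨ω, hy, hx⟩
    exact ⟨⟨ω, hx⟩, y₀, ⟨ω, hx, hy⟩, rfl⟩
  · rintro ⟨_, y₁, ⟨ω, hx, hy⟩, rfl⟩
    exact ⟨ω, hy, hx⟩
end

section
/- Two uncertain variables u₁ : Ω → U₁ and u₂ : Ω → U₂ are unrelated (i.e., their joint range equals the Cartesian product of their marginal ranges) if and only if for every u in the range of u₂, the conditional range of u₁ given u equals the marginal range of u₁: ⟦u₁ | u⟧ = ⟦u₁⟧. -/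
theorem unrelated_iff_conditional_full {Ω U₁ U₂ : Type*} (u₁ : Ω → U₁) (u₂ : Ω → U₂) :
    Set.range (fun ω => (u₁ ω, u₂ ω)) = Set.range u₁ ×ˢ Set.range u₂ ↔
      ∀ u ∈ Set.range u₂, u₁ '' (u₂ ⁻¹' {u}) = Set.range u₁ := by
  constructor
  · rintro h u ⟨ω₀, rfl⟩
    ext x
    constructor
    · rintro ⟨ω, _, rfl⟩; exact ⟨ω, rfl⟩
    · rintro ⟨ω, rfl⟩
      have : (u₁ ω, u₂ ω₀) ∈ Set.range (fun ω => (u₁ ω, u₂ ω)) := by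
        rw [h]; exact ⟨⟨ω, rfl⟩, ⟨ω₀, rfl⟩⟩
      obtain ⟨ω', hω'⟩ := this
      have h1 : u₁ ω' = u₁ ω := congrArg Prod.fst hω'
      have h2 : u₂ ω' = u₂ ω₀ := congrArg Prod.snd hω'
      exact ⟨ω', h2, h1⟩
  · intro h
    ext ⟨x, y⟩
    constructor
    · rintro ⟨ω, hω⟩
      simp only [Prod.mk.injEq] at hω
      exact ⟨⟨ω, hω.1⟩, ⟨ω, hω.2⟩⟩
    · rintro ⟨⟨ω₁, rfl⟩, ⟨ω₂, rfl⟩⟩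
      have := h (u₂ ω₂) ⟨ω₂, rfl⟩
      have hx : u₁ ω₁ ∈ u₁ '' (u₂ ⁻¹' {u₂ ω₂}) := this ▸ ⟨ω₁, rfl⟩
      obtain ⟨ω, hω, hω1⟩ := hx
      exact ⟨ω, Prod.ext hω1 hω⟩
end

section
/- Invariance of unrelatedness under maps: if u₁ : Ω → U₁ and u₂ : Ω → U₂ are unrelated uncertain variables, then for arbitrary maps h₁ : U₁ → V₁ and h₂ : U₂ → V₂, the uncertain variables h₁ ∘ u₁ and h₂ ∘ u₂ are unrelated; in particular, for every u ∈ Set.range u₂, ⟦h₁(u₁) | h₂(u)⟧ = ⟦h₁(u₁)⟧. -/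
theorem unrelatedness_invariant_under_maps {Ω U₁ U₂ V₁ V₂ : Type*}
    (u₁ : Ω → U₁) (u₂ : Ω → U₂) (h₁ : U₁ → V₁) (h₂ : U₂ → V₂)
    (hun : Set.range (fun ω => (u₁ ω, u₂ ω)) = Set.range u₁ ×ˢ Set.range u₂) :
    (Set.range (fun ω => (h₁ (u₁ ω), h₂ (u₂ ω))) =
       Set.range (h₁ ∘ u₁) ×ˢ Set.range (h₂ ∘ u₂)) ∧
    ∀ u ∈ Set.range u₂,
      (h₁ ∘ u₁) '' ((h₂ ∘ u₂) ⁻¹' {h₂ u}) = Set.range (h₁ ∘ u₁) := by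
  have key : ∀ (a b : Ω), ∃ ω, u₁ ω = u₁ a ∧ u₂ ω = u₂ b := by
    intro a b
    have : (u₁ a, u₂ b) ∈ Set.range u₁ ×ˢ Set.range u₂ := ⟨⟨a, rfl⟩, ⟨b, rfl⟩⟩
    rw [← hun] at this
    obtain ⟨ω, hω⟩ := this
    exact ⟨ω, congrArg Prod.fst hω, congrArg Prod.snd hω⟩
  constructor
  · ext ⟨v₁, v₂⟩
    simp only [Set.mem_range, Set.mem_prod, Function.comp]
    constructor
    · rintro ⟨ω, h⟩
      exact ⟨⟨ω, congrArg Prod.fst h⟩, ⟨ω, congrArg Prod.snd h⟩⟩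
    · rintro ⟨⟨a, ha⟩, ⟨b, hb⟩⟩
      obtain ⟨ω, h1, h2⟩ := key a b
      exact ⟨ω, by simp [h1, h2, ha, hb]⟩
  · rintro u ⟨b, rfl⟩
    ext v
    simp only [Set.mem_image, Set.mem_preimage, Set.mem_singleton_iff, Set.mem_range,
      Function.comp]
    constructor
    · rintro ⟨ω, _, rfl⟩
      exact ⟨ω, rfl⟩
    · rintro ⟨a, rfl⟩
      obtain ⟨ω, h1, h2⟩ := key a b
      exact ⟨ω, by rw [h2], by rw [h1]⟩
end

section
/- Update step under unrelatedness (linear/nonlinear measurement): suppose y(ω) = g(x(ω), v(ω)) on Ω and v is unrelated to the pair (x, restriction to event E), in the sense that v '' (E ∩ x ⁻¹' {x₀}) = Set.range v for every x₀ ∈ x '' E. Then the posterior range {x(ω) : ω ∈ E, y(ω) = y₀} equals (⋃_{v₀ ∈ Set.range v} {x₀ : g x₀ v₀ = y₀}) ∩ (x '' E). -/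
theorem update_step_unrelated {Ω X V Y : Type*}
    (x : Ω → X) (v : Ω → V) (g : X → V → Y) (y : Ω → Y)
    (hy : ∀ ω, y ω = g (x ω) (v ω)) (E : Set Ω) (y₀ : Y)
    (hun : ∀ x₀ ∈ x '' E, v '' (E ∩ x ⁻¹' {x₀}) = Set.range v) :
    {x₀ | ∃ ω ∈ E, x ω = x₀ ∧ y ω = y₀} =
      (⋃ v₀ ∈ Set.range v, {x₀ | g x₀ v₀ = y₀}) ∩ (x '' E) := by
  ext x₀
  constructor
  · rintro ⟨ω, hω, rfl, hyω⟩
    refine ⟨Set.mem_biUnion ⟨ω, rfl⟩ ?_, ω, hω, rfl⟩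
    show g (x ω) (v ω) = y₀; rw [← hy]; exact hyω
  · rintro ⟨hmem, hx⟩
    obtain ⟨v₀, hv₀, hg⟩ := Set.mem_iUnion₂.mp hmem
    rw [← hun x₀ hx] at hv₀
    obtain ⟨ω, ⟨hωE, hωx⟩, rfl⟩ := hv₀
    exact ⟨ω, hωE, hωx, by rw [hy, hωx, hg]⟩
end

section
/- Non-stochastic Markov property from unrelatedness: suppose x_{k} = f(x_{k-1}, w) pointwise, and w is unrelated to the pair (x_{k-1}, z) for some function z : Ω → Z (i.e., the joint range of (w, (x_{k-1}, z)) equals the product of the ranges). Then for all (x₀, z₀) in the range of (x_{k-1}, z), the conditional range of x_k given x_{k-1} = x₀ and z = z₀ equals the conditional range of x_k given x_{k-1} = x₀ alone: xk '' ((x_{k-1}) ⁻¹' {x₀} ∩ z ⁻¹' {z₀}) = xk '' ((x_{k-1}) ⁻¹' {x₀}). -/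
theorem nonstochastic_markov_property {Ω X W Z X' : Type*}
    (xk1 : Ω → X) (w : Ω → W) (z : Ω → Z) (f : X → W → X') (xk : Ω → X')
    (hx : ∀ ω, xk ω = f (xk1 ω) (w ω))
    (hun : Set.range (fun ω => (w ω, (xk1 ω, z ω))) =
      Set.range w ×ˢ Set.range (fun ω => (xk1 ω, z ω)))
    (x₀ : X) (z₀ : Z) (h : (x₀, z₀) ∈ Set.range (fun ω => (xk1 ω, z ω))) :
    xk '' (xk1 ⁻¹' {x₀} ∩ z ⁻¹' {z₀}) = xk '' (xk1 ⁻¹' {x₀}) := by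
  apply Set.Subset.antisymm
  · exact Set.image_mono Set.inter_subset_left
  · rintro _ ⟨ω, hω, rfl⟩
    have hmem : (w ω, (x₀, z₀)) ∈ Set.range (fun ω => (w ω, (xk1 ω, z ω))) := by
      rw [hun]; exact ⟨⟨ω, rfl⟩, h⟩
    obtain ⟨ω', hω'⟩ := hmem
    obtain ⟨hw, hx1, hz⟩ : w ω' = w ω ∧ xk1 ω' = x₀ ∧ z ω' = z₀ := by
      simpa [Prod.ext_iff] using hω'
    refine ⟨ω', ⟨hx1, hz⟩, ?_⟩
    have hx0 : xk1 ω = x₀ := hω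
    simp [hx, hw, hx1, hx0]
end
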